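/- The map i(x,y) = (y²/x, y) is an involution, and conjugation by i sends the canonical flow φ_N to φ_{−N}: i ∘ φ_N ∘ i = φ_{−N} for every integer N. -/

import Mathlib

/-- The canonical flow of level `N`. -/
noncomputable def phiN (N : ℤ) (p : ℝ × ℝ) : ℝ × ℝ :=
  (p.1 * (p.2 + 1) ^ (N - 1), p.2 / (p.2 + 1))

/-- The involution `i(x,y) = (y²/x, y)`. -/
noncomputable def inv0 (p : ℝ × ℝ) : ℝ × ℝ :=
  (p.2 ^ 2 / p.1, p.2)

/-- `i(x,y) = (y²/x, y)` is an involution and conjugation by it sends `φ_N` to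
`φ_{−N}`, wherever defined. -/
theorem involution_conjugates_phiN (N : ℤ) (x y : ℝ)
    (hx : x ≠ 0) (hy : y ≠ 0) (hy1 : y + 1 ≠ 0) :
    inv0 (inv0 (x, y)) = (x, y) ∧
    inv0 (phiN N (inv0 (x, y))) = phiN (-N) (x, y) := by
  constructor
  · simp only [inv0]
    field_simp
  · simp only [inv0, phiN]
    refine Prod.ext ?_ rfl
    simp only
    have h2 : (y / (y + 1)) ^ 2 = y ^ 2 / (y + 1) ^ 2 := by
      rw [div_pow]
    rw [h2]
    have key : (y + 1) ^ (-N - 1) * ((y + 1) ^ (N - 1) * (y + 1) ^ (2:ℕ)) = 1 := by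
      rw [← zpow_natCast (y+1) 2, ← zpow_add₀ hy1, ← zpow_add₀ hy1,
        show (-N - 1 + (N - 1 + (2:ℕ))) = 0 by push_cast; ring, zpow_zero]
    have h1 : (y + 1) ^ (N - 1) ≠ 0 := zpow_ne_zero _ hy1
    field_simp
    linear_combination (-1) * key
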